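/- Let $G_n$ be an $n \times n$ tridiagonal matrix as above with all leading principal minors $P_k$ nonzero, and define the backward convergents $C_k = P_k / P_{k-1}$ for $1 \le k \le n$. Then the $(i,i)$ diagonal entry of the inverse satisfies $[G_n^{-1}]_{ii} = \frac{1}{C_i} + \sum_{k=i+1}^{n}\left(\frac{1}{C_k}\prod_{t=i}^{k-1}\frac{y_t z_t}{C_t^2}\right)$. -/

import Mathlib

open Matrix Finset

def tri (x y z : ℕ → ℝ) (m : ℕ) : Matrix (Fin m) (Fin m) ℝ :=
  Matrix.of fun i j =>
    if (i : ℕ) = (j : ℕ) then x (i.val + 1)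
    else if (j : ℕ) = i.val + 1 then y (i.val + 1)
    else if (i : ℕ) = j.val + 1 then z (j.val + 1)
    else 0

lemma val_succAbove {n : ℕ} (p : Fin (n+1)) (i : Fin n) :
    ((p.succAbove i : Fin (n+1)) : ℕ) = if (i:ℕ) < (p:ℕ) then (i:ℕ) else (i:ℕ)+1 := by
  rw [Fin.succAbove]
  split_ifs with h h2 h2 <;> simp_all [Fin.lt_def]

lemma tri_submatrix_succ (x y z : ℕ → ℝ) (m : ℕ) :
    (tri x y z (m+1)).submatrix Fin.succ Fin.succ
      = tri (fun k => x (k+1)) (fun k => y (k+1)) (fun k => z (k+1)) m := by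
  ext i j
  simp only [tri, submatrix_apply, of_apply, Fin.val_succ]
  split_ifs <;> first | rfl | omega | simp_all

lemma tri_rec_first (x y z : ℕ → ℝ) (m : ℕ) :
    (tri x y z (m+2)).det
      = x 1 * (tri (fun k => x (k+1)) (fun k => y (k+1)) (fun k => z (k+1)) (m+1)).det
        - y 1 * z 1 * (tri (fun k => x (k+2)) (fun k => y (k+2)) (fun k => z (k+2)) m).det := by
  set A := tri x y z (m+2) with hA
  have hB : (A.submatrix Fin.succ ((1:Fin (m+2)).succAbove)).det
      = z 1 * (tri (fun k => x (k+2)) (fun k => y (k+2)) (fun k => z (k+2)) m).det := by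
    rw [det_succ_column_zero, Fin.sum_univ_succ]
    have h1 : ((A.submatrix Fin.succ ((1:Fin (m+2)).succAbove)).submatrix
        (Fin.succAbove 0) Fin.succ)
        = tri (fun k => x (k+2)) (fun k => y (k+2)) (fun k => z (k+2)) m := by
      ext i j
      simp only [hA, tri, submatrix_apply, of_apply, val_succAbove, Fin.val_succ,
        Fin.val_zero, Fin.val_one]
      split_ifs <;> first | rfl | omega | simp_all
    have h2 : (A.submatrix Fin.succ ((1:Fin (m+2)).succAbove)) 0 0 = z 1 := by
      simp only [hA, tri, submatrix_apply, of_apply, val_succAbove, Fin.val_succ,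
        Fin.val_zero, Fin.val_one]
      norm_num
    have h3 : ∀ i : Fin m,
        (A.submatrix Fin.succ ((1:Fin (m+2)).succAbove)) i.succ 0 = 0 := by
      intro i
      simp only [hA, tri, submatrix_apply, of_apply, val_succAbove, Fin.val_succ,
        Fin.val_zero, Fin.val_one]
      split_ifs <;> first | rfl | omega | simp_all
    rw [h1, h2]
    simp only [h3, mul_zero, zero_mul, Finset.sum_const_zero, add_zero,
      Fin.val_zero, pow_zero, one_mul]
  rw [det_succ_row_zero, Fin.sum_univ_succ, Fin.sum_univ_succ]
  have e0 : A 0 0 = x 1 := by simp [hA, tri]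
  have e1 : A 0 (1 : Fin (m+2)) = y 1 := by
    simp only [hA, tri, of_apply, Fin.val_zero, Fin.val_one]
    norm_num
  have etail : ∀ j : Fin m, A 0 j.succ.succ = 0 := by
    intro j
    simp only [hA, tri, of_apply, Fin.val_succ, Fin.val_zero]
    split_ifs <;> first | rfl | omega | simp_all
  have hsub0 : A.submatrix Fin.succ (Fin.succAbove 0)
      = tri (fun k => x (k+1)) (fun k => y (k+1)) (fun k => z (k+1)) (m+1) := by
    rw [Fin.succAbove_zero, tri_submatrix_succ]
  have hsucc1 : (Fin.succ (0 : Fin (m+1))) = (1 : Fin (m+2)) := rfl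
  rw [e0, hsucc1, e1, hsub0, hB]
  simp only [etail, mul_zero, zero_mul, Finset.sum_const_zero, add_zero,
    Fin.val_zero, pow_zero, one_mul, Fin.val_one, pow_one]
  ring

lemma tri_submatrix_castSucc (x y z : ℕ → ℝ) (m : ℕ) :
    (tri x y z (m+1)).submatrix Fin.castSucc Fin.castSucc = tri x y z m := by
  ext i j
  simp only [tri, submatrix_apply, of_apply, Fin.coe_castSucc]

lemma tri_rec_last (x y z : ℕ → ℝ) (m : ℕ) :
    (tri x y z (m+2)).det
      = x (m+2) * (tri x y z (m+1)).det
        - y (m+1) * z (m+1) * (tri x y z m).det := by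
  set A := tri x y z (m+2) with hA
  have hC : (A.submatrix (Fin.last (m+1)).succAbove
        ((Fin.castSucc (Fin.last m)).succAbove)).det
      = y (m+1) * (tri x y z m).det := by
    rw [det_succ_column _ (Fin.last m), Fin.sum_univ_castSucc]
    have h1 : ((A.submatrix (Fin.last (m+1)).succAbove
          ((Fin.castSucc (Fin.last m)).succAbove)).submatrix
          (Fin.last m).succAbove (Fin.last m).succAbove) = tri x y z m := by
      ext i j
      simp only [hA, tri, submatrix_apply, of_apply, val_succAbove, Fin.coe_castSucc,
        Fin.val_last, Fin.succAbove_last]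
      split_ifs <;> first | rfl | omega | simp_all
    have h2 : (A.submatrix (Fin.last (m+1)).succAbove
          ((Fin.castSucc (Fin.last m)).succAbove)) (Fin.last m) (Fin.last m) = y (m+1) := by
      simp only [hA, tri, submatrix_apply, of_apply, val_succAbove, Fin.coe_castSucc,
        Fin.val_last, Fin.succAbove_last]
      split_ifs <;> first | rfl | omega | simp_all
    have h3 : ∀ i : Fin m, (A.submatrix (Fin.last (m+1)).succAbove
          ((Fin.castSucc (Fin.last m)).succAbove)) (Fin.castSucc i) (Fin.last m) = 0 := by
      intro i
      simp only [hA, tri, submatrix_apply, of_apply, val_succAbove, Fin.coe_castSucc,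
        Fin.val_last, Fin.succAbove_last]
      split_ifs <;> first | rfl | omega | simp_all
    rw [h1, h2]
    have hsign : ((-1:ℝ)) ^ ((Fin.last m : ℕ) + (Fin.last m : ℕ)) = 1 :=
      Even.neg_one_pow ⟨m, by simp [Fin.val_last]⟩
    simp only [h3, mul_zero, zero_mul, Finset.sum_const_zero, zero_add, hsign, one_mul]
  rw [det_succ_row A (Fin.last (m+1)), Fin.sum_univ_castSucc, Fin.sum_univ_castSucc]
  have e0 : A (Fin.last (m+1)) (Fin.last (m+1)) = x (m+2) := by
    simp only [hA, tri, of_apply, Fin.val_last]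
    split_ifs <;> first | rfl | omega | simp_all
  have e1 : A (Fin.last (m+1)) (Fin.castSucc (Fin.last m)) = z (m+1) := by
    simp only [hA, tri, of_apply, Fin.val_last, Fin.coe_castSucc]
    split_ifs <;> first | rfl | omega | simp_all
  have etail : ∀ j : Fin m, A (Fin.last (m+1)) (Fin.castSucc (Fin.castSucc j)) = 0 := by
    intro j
    simp only [hA, tri, of_apply, Fin.val_last, Fin.coe_castSucc]
    split_ifs <;> first | rfl | omega | simp_all
  have hsub0 : A.submatrix (Fin.last (m+1)).succAbove (Fin.last (m+1)).succAbove
      = tri x y z (m+1) := by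
    rw [Fin.succAbove_last, tri_submatrix_castSucc]
  rw [e0, e1, hsub0, hC]
  have hs1 : ((-1:ℝ)) ^ ((Fin.last (m+1) : ℕ) + (Fin.last (m+1) : ℕ)) = 1 :=
    Even.neg_one_pow ⟨m+1, by simp [Fin.val_last]⟩
  have hs2 : ((-1:ℝ)) ^ ((Fin.last (m+1) : ℕ) + ((Fin.castSucc (Fin.last m)) : ℕ)) = -1 :=
    Odd.neg_one_pow ⟨m, by simp [Fin.val_last, Fin.coe_castSucc]; ring⟩
  simp only [etail, mul_zero, zero_mul, Finset.sum_const_zero, zero_add, hs1, hs2, one_mul]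
  ring

lemma tri_pinch (x y z : ℕ → ℝ) (m : ℕ) (i : Fin (m+1)) :
    ((tri x y z (m+1)).submatrix i.succAbove i.succAbove).det
      = (tri x y z i.val).det
        * (tri (fun k => x (k+(i.val+1))) (fun k => y (k+(i.val+1)))
            (fun k => z (k+(i.val+1))) (m - i.val)).det := by
  have him : (i : ℕ) ≤ m := Fin.is_le i
  have hm : (i:ℕ) + (m - i.val) = m := by omega
  set e : Fin (i.val) ⊕ Fin (m - i.val) ≃ Fin m := finSumFinEquiv.trans (finCongr hm) with he
  rw [← det_submatrix_equiv_self e]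
  have hblk : (((tri x y z (m+1)).submatrix i.succAbove i.succAbove).submatrix e e)
      = Matrix.fromBlocks (tri x y z i.val) 0 0
          (tri (fun k => x (k+(i.val+1))) (fun k => y (k+(i.val+1)))
            (fun k => z (k+(i.val+1))) (m - i.val)) := by
    ext a b
    rcases a with a | a <;> rcases b with b | b <;>
      simp only [he, submatrix_apply, Equiv.trans_apply, finCongr_apply,
        finSumFinEquiv_apply_left, finSumFinEquiv_apply_right, val_succAbove,
        Fin.coe_cast, Fin.coe_castAdd, Fin.coe_natAdd, tri, of_apply,
        Matrix.fromBlocks_apply₁₁, Matrix.fromBlocks_apply₁₂,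
        Matrix.fromBlocks_apply₂₁, Matrix.fromBlocks_apply₂₂, Matrix.zero_apply] <;>
      have ha := a.isLt <;> have hb := b.isLt <;>
      split_ifs <;>
        first | rfl | omega | (exfalso; omega) | (congr 1; omega) | simp_all
  rw [hblk, det_fromBlocks_zero₂₁]

/-- trailing minor starting at 1-based row `j+1` (size `n - j`). -/
noncomputable def Qd (x y z : ℕ → ℝ) (n j : ℕ) : ℝ :=
  (tri (fun k => x (k+j)) (fun k => y (k+j)) (fun k => z (k+j)) (n - j)).det

lemma Qd_self (x y z : ℕ → ℝ) (n : ℕ) : Qd x y z n n = 1 := by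
  rw [Qd, Nat.sub_self]; exact det_fin_zero

lemma Qd_rec (x y z : ℕ → ℝ) (n r : ℕ) (h2 : r + 2 ≤ n) :
    Qd x y z n r = x (r+1) * Qd x y z n (r+1)
      - y (r+1) * z (r+1) * Qd x y z n (r+2) := by
  have h0 : n - r = (n - r - 2) + 2 := by omega
  have h1 : n - (r+1) = (n - r - 2) + 1 := by omega
  have h2' : n - (r+2) = n - r - 2 := by omega
  rw [Qd, Qd, Qd, h0, h1, h2', tri_rec_first]
  have ex : (fun k => x (k + 1 + r)) = (fun k => x (k + (r+1))) := by
    funext k; congr 1; omega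
  have ey : (fun k => y (k + 1 + r)) = (fun k => y (k + (r+1))) := by
    funext k; congr 1; omega
  have ez : (fun k => z (k + 1 + r)) = (fun k => z (k + (r+1))) := by
    funext k; congr 1; omega
  have ex2 : (fun k => x (k + 2 + r)) = (fun k => x (k + (r+2))) := by
    funext k; congr 1; omega
  have ey2 : (fun k => y (k + 2 + r)) = (fun k => y (k + (r+2))) := by
    funext k; congr 1; omega
  have ez2 : (fun k => z (k + 2 + r)) = (fun k => z (k + (r+2))) := by
    funext k; congr 1; omega
  simp only [ex, ey, ez, ex2, ey2, ez2]
  norm_num [add_comm]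

lemma keyD (x y z : ℕ → ℝ) (n : ℕ) :
    ∀ d r : ℕ, 1 ≤ r → r + 1 + d = n →
      (tri x y z r).det * Qd x y z n r
        - y r * z r * (tri x y z (r-1)).det * Qd x y z n (r+1)
        = (tri x y z n).det := by
  intro d
  induction d with
  | zero =>
      intro r hr hrn
      have hQr : Qd x y z n r = x (r+1) := by
        have : n - r = 1 := by omega
        rw [Qd, this]
        rw [show (tri (fun k => x (k+r)) (fun k => y (k+r)) (fun k => z (k+r)) 1).det
            = x (1 + r) by rw [det_fin_one]; simp [tri]]
        congr 1; omega
      have hQr1 : Qd x y z n (r+1) = 1 := by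
        rw [show r + 1 = n by omega, Qd_self]
      rw [hQr, hQr1, mul_one]
      have hrec := tri_rec_last x y z (r-1)
      rw [show r - 1 + 2 = r + 1 by omega, show r - 1 + 1 = r by omega] at hrec
      rw [show n = r + 1 by omega, hrec]
      ring
  | succ d ih =>
      intro r hr hrn
      have hQ := Qd_rec x y z n r (by omega)
      have hrec := tri_rec_last x y z (r-1)
      rw [show r - 1 + 2 = r + 1 by omega, show r - 1 + 1 = r by omega] at hrec
      have := ih (r+1) (by omega) (by omega)
      rw [show r + 1 - 1 = r from rfl] at this
      rw [hQ, ← this, hrec]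
      ring

lemma sumId (x y z : ℕ → ℝ) (n : ℕ)
    (hne : ∀ k, k ≤ n → (tri x y z k).det ≠ 0) :
    ∀ d r : ℕ, 1 ≤ r → r + d = n →
      (tri x y z (r-1)).det * Qd x y z n r / (tri x y z n).det
        = ∑ k ∈ Finset.Icc r n, (tri x y z (r-1)).det ^ 2
            * (∏ t ∈ Finset.Icc r (k-1), (y t * z t))
            / ((tri x y z k).det * (tri x y z (k-1)).det) := by
  intro d
  induction d with
  | zero =>
      intro r hr hrn
      subst hrn
      simp only [Nat.add_zero] at *
      rw [Finset.Icc_self, Finset.sum_singleton, Qd_self,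
        Finset.Icc_eq_empty (by omega : ¬ (r:ℕ) ≤ r - 1), Finset.prod_empty]
      have h1 := hne r le_rfl
      have h2 := hne (r-1) (by omega)
      field_simp
  | succ d ih =>
      intro r hr hrn
      have hrn' : r < n := by omega
      have hkey := keyD x y z n d r hr (by omega)
      have hIH := ih (r+1) (by omega) (by omega)
      rw [show r + 1 - 1 = r from rfl] at hIH
      rw [← Finset.Ioc_insert_left hrn'.le, Finset.sum_insert Finset.left_notMem_Ioc,
        ← Finset.Icc_add_one_left_eq_Ioc]
      have hterm : ∀ k ∈ Finset.Icc (r+1) n,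
          (tri x y z (r-1)).det ^ 2 * (∏ t ∈ Finset.Icc r (k-1), (y t * z t))
              / ((tri x y z k).det * (tri x y z (k-1)).det)
            = (y r * z r * (tri x y z (r-1)).det ^ 2 / (tri x y z r).det ^ 2)
              * ((tri x y z r).det ^ 2 * (∏ t ∈ Finset.Icc (r+1) (k-1), (y t * z t))
                / ((tri x y z k).det * (tri x y z (k-1)).det)) := by
        intro k hk
        simp only [Finset.mem_Icc] at hk
        have hprod : (∏ t ∈ Finset.Icc r (k-1), (y t * z t))
            = (y r * z r) * ∏ t ∈ Finset.Icc (r+1) (k-1), (y t * z t) := by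
          rw [← Finset.Ioc_insert_left (by omega : r ≤ k - 1),
            Finset.prod_insert Finset.left_notMem_Ioc, ← Finset.Icc_add_one_left_eq_Ioc]
        rw [hprod]
        have h1 : (tri x y z r).det ^ 2 ≠ 0 := pow_ne_zero _ (hne r (by omega))
        rw [div_mul_div_comm, show y r * z r * (tri x y z (r-1)).det ^ 2 *
            ((tri x y z r).det ^ 2 * ∏ t ∈ Finset.Icc (r+1) (k-1), (y t * z t))
            = (tri x y z r).det ^ 2 * ((tri x y z (r-1)).det ^ 2 *
              (y r * z r * ∏ t ∈ Finset.Icc (r+1) (k-1), (y t * z t))) by ring,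
          show (tri x y z r).det ^ 2 * ((tri x y z k).det * (tri x y z (k-1)).det)
            = (tri x y z r).det ^ 2 * ((tri x y z k).det * (tri x y z (k-1)).det) from rfl,
          mul_div_mul_left _ _ h1, mul_assoc]
      rw [Finset.sum_congr rfl hterm, ← Finset.mul_sum, ← hIH]
      have hWr : (∏ t ∈ Finset.Icc r (r-1), (y t * z t)) = 1 := by
        rw [Finset.Icc_eq_empty (by omega : ¬ (r:ℕ) ≤ r - 1), Finset.prod_empty]
      rw [hWr]
      have h1 := hne r (by omega)
      have h2 := hne (r-1) (by omega)
      have h3 := hne n le_rfl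
      have hQr : Qd x y z n r = ((tri x y z n).det
          + y r * z r * (tri x y z (r-1)).det * Qd x y z n (r+1)) / (tri x y z r).det := by
        field_simp
        linear_combination hkey
      rw [hQr]
      field_simp

theorem stmt14 (n : ℕ) (hn : 1 ≤ n) (x y z : ℕ → ℝ)
    (G : Matrix (Fin n) (Fin n) ℝ)
    (hG : ∀ i j : Fin n, G i j =
      if (i : ℕ) = (j : ℕ) then x (i.val + 1)
      else if (j : ℕ) = i.val + 1 then y (i.val + 1)
      else if (i : ℕ) = j.val + 1 then z (j.val + 1)
      else 0)
    (P : ℕ → ℝ)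
    (hP : ∀ (k : ℕ) (hk : k ≤ n), P k =
      Matrix.det (fun i j : Fin k =>
        G ⟨i.val, lt_of_lt_of_le i.isLt hk⟩ ⟨j.val, lt_of_lt_of_le j.isLt hk⟩))
    (hPne : ∀ k, k ≤ n → P k ≠ 0)
    (Cc : ℕ → ℝ) (hC : ∀ k, 1 ≤ k → k ≤ n → Cc k = P k / P (k - 1)) :
    ∀ i : Fin n, G⁻¹ i i =
      1 / Cc (i.val + 1) +
        ∑ k ∈ Finset.Icc (i.val + 2) n,
          (1 / Cc k) * ∏ t ∈ Finset.Icc (i.val + 1) (k - 1),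
            (y t * z t) / (Cc t) ^ 2 := by
  intro i
  have hGt : G = tri x y z n := by
    ext a b; rw [hG]; rfl
  have hPd : ∀ k, k ≤ n → P k = (tri x y z k).det := by
    intro k hk
    rw [hP k hk]
    congr 1
    ext a b
    rw [hG]; rfl
  have hne : ∀ k, k ≤ n → (tri x y z k).det ≠ 0 := fun k hk => hPd k hk ▸ hPne k hk
  obtain ⟨m, rfl⟩ : ∃ m, n = m + 1 := ⟨n - 1, by omega⟩
  have him : (i : ℕ) ≤ m := Fin.is_le i
  -- LHS
  have hL : G⁻¹ i i = (tri x y z (i : ℕ)).det * Qd x y z (m+1) ((i : ℕ)+1)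
      / (tri x y z (m+1)).det := by
    have hu : IsUnit G.det := by
      rw [hGt]; exact (hne (m+1) le_rfl).isUnit
    rw [Matrix.inv_def, Matrix.smul_apply, smul_eq_mul, Ring.inverse_eq_inv',
      Matrix.adjugate_fin_succ_eq_det_submatrix]
    have hsign : ((-1 : ℝ)) ^ ((i : ℕ) + (i : ℕ)) = 1 := Even.neg_one_pow ⟨(i : ℕ), rfl⟩
    rw [hsign, one_mul, hGt, tri_pinch]
    have hQ : (tri (fun k => x (k+((i:ℕ)+1))) (fun k => y (k+((i:ℕ)+1)))
        (fun k => z (k+((i:ℕ)+1))) (m - (i:ℕ))).det = Qd x y z (m+1) ((i:ℕ)+1) := by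
      rw [Qd, Nat.succ_sub_succ]
    rw [hQ]
    ring
  -- telescoping product of Cc
  have htel : ∀ s : ℕ, (i : ℕ) ≤ s → s ≤ m + 1 →
      (∏ t ∈ Finset.Icc ((i:ℕ)+1) s, Cc t) = P s / P (i : ℕ) := by
    intro s hs
    induction s, hs using Nat.le_induction with
    | base =>
        intro _
        rw [Finset.Icc_eq_empty (by omega), Finset.prod_empty,
          div_self (hPne _ (by omega))]
    | succ s hs ih =>
        intro hsn
        rw [Finset.prod_Icc_succ_top (by omega : (i:ℕ)+1 ≤ s+1), ih (by omega),
          hC (s+1) (by omega) hsn]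
        have hPs := hPne s (by omega)
        have hPr := hPne (i : ℕ) (by omega)
        rw [Nat.add_sub_cancel]
        field_simp
  -- RHS as the standard sum
  have hRHS : 1 / Cc ((i:ℕ) + 1) +
        ∑ k ∈ Finset.Icc ((i:ℕ) + 2) (m+1),
          (1 / Cc k) * ∏ t ∈ Finset.Icc ((i:ℕ) + 1) (k - 1),
            (y t * z t) / (Cc t) ^ 2
      = ∑ k ∈ Finset.Icc ((i:ℕ)+1) (m+1), P (i:ℕ) ^ 2
          * (∏ t ∈ Finset.Icc ((i:ℕ)+1) (k-1), (y t * z t))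
          / (P k * P (k-1)) := by
    rw [← Finset.Ioc_insert_left (by omega : (i:ℕ)+1 ≤ m+1),
      Finset.sum_insert Finset.left_notMem_Ioc, ← Finset.Icc_add_one_left_eq_Ioc]
    congr 1
    · -- first term
      rw [hC ((i:ℕ)+1) (by omega) (by omega), Nat.add_sub_cancel,
        Finset.Icc_eq_empty (by omega : ¬ (i:ℕ)+1 ≤ (i:ℕ)), Finset.prod_empty]
      have h1 := hPne ((i:ℕ)+1) (by omega)
      have h2 := hPne (i:ℕ) (by omega)
      field_simp
    · refine Finset.sum_congr rfl ?_
      intro k hk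
      simp only [Finset.mem_Icc] at hk
      have hk1 : 1 ≤ k := by omega
      have hprod : (∏ t ∈ Finset.Icc ((i:ℕ)+1) (k-1), (y t * z t / Cc t ^ 2))
          = (∏ t ∈ Finset.Icc ((i:ℕ)+1) (k-1), (y t * z t))
            / (P (k-1) / P (i:ℕ)) ^ 2 := by
        rw [Finset.prod_div_distrib, Finset.prod_pow,
          htel (k-1) (by omega) (by omega)]
      rw [hprod, hC k (by omega) (by omega)]
      have h1 := hPne k (by omega)
      have h2 := hPne (k-1) (by omega)
      have h3 := hPne (i:ℕ) (by omega)
      field_simp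
  rw [hRHS, hL]
  have hmain := sumId x y z (m+1) hne (m + 1 - ((i:ℕ)+1)) ((i:ℕ)+1) (by omega) (by omega)
  rw [Nat.add_sub_cancel] at hmain
  rw [hmain]
  refine Finset.sum_congr rfl ?_
  intro k hk
  simp only [Finset.mem_Icc] at hk
  rw [hPd k (by omega), hPd (k-1) (by omega), hPd (i:ℕ) (by omega)]
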